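/- Every cycle (as a facet complex) is connected. -/
import Mathlib


variable {V : Type*} [DecidableEq V]

/-- A facet complex: no facet contains another. -/
def IsFacetComplex (Δ : Finset (Finset V)) : Prop :=
  ∀ F ∈ Δ, ∀ G ∈ Δ, F ⊆ G → F = G

/-- `F` is a leaf of `Δ`. -/
def IsLeaf (Δ : Finset (Finset V)) (F : Finset V) : Prop :=
  F ∈ Δ ∧ (Δ = {F} ∨ ∃ G ∈ Δ.erase F, ∀ H ∈ Δ.erase F, H ∩ F ⊆ G ∩ F)

/-- `Δ` is a forest: every nonempty subset has a leaf. -/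
def IsForest (Δ : Finset (Finset V)) : Prop :=
  ∀ Γ ⊆ Δ, Γ.Nonempty → ∃ F, IsLeaf Γ F

/-- `Δ` is connected: any two facets are joined by a path of consecutively
intersecting facets. -/
def FCConnected (Δ : Finset (Finset V)) : Prop :=
  ∀ F ∈ Δ, ∀ G ∈ Δ,
    Relation.ReflTransGen (fun A B => A ∈ Δ ∧ B ∈ Δ ∧ (A ∩ B).Nonempty) F G

/-- A (simplicial) tree is a connected forest. -/
def IsTree (Δ : Finset (Finset V)) : Prop := FCConnected Δ ∧ IsForest Δ

/-- A cycle: a nonempty facet complex with no leaf, every nonempty proper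
subset of which has a leaf. -/
def IsCycle (Δ : Finset (Finset V)) : Prop :=
  Δ.Nonempty ∧ (¬ ∃ F, IsLeaf Δ F) ∧ ∀ Γ ⊂ Δ, Γ.Nonempty → ∃ F, IsLeaf Γ F

/-- Strong neighbors in `Δ`. -/
def StrongNeighbor (Δ : Finset (Finset V)) (F G : Finset V) : Prop :=
  F ∈ Δ ∧ G ∈ Δ ∧ F ≠ G ∧ ∀ H ∈ Δ, F ∩ G ⊆ H → H = F ∨ H = G

theorem cycle_connected (Δ : Finset (Finset V)) (hΔ : IsFacetComplex Δ)
    (hcyc : IsCycle Δ) : FCConnected Δ := by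
  classical
  intro F hF G hG
  set R : Finset V → Finset V → Prop :=
    fun A B => A ∈ Δ ∧ B ∈ Δ ∧ (A ∩ B).Nonempty with hR
  set Γ : Finset (Finset V) := Δ.filter (fun A => Relation.ReflTransGen R F A) with hΓ
  have hΓsub : Γ ⊆ Δ := Finset.filter_subset _ _
  have hFΓ : F ∈ Γ := Finset.mem_filter.mpr ⟨hF, Relation.ReflTransGen.refl⟩
  have hclosed : ∀ A ∈ Γ, ∀ B ∈ Δ, (A ∩ B).Nonempty → B ∈ Γ := by
    intro A hA B hB hab
    rw [hΓ, Finset.mem_filter] at hA ⊢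
    exact ⟨hB, hA.2.trans (Relation.ReflTransGen.single ⟨hA.1, hB, hab⟩)⟩
  -- show Γ = Δ
  have hΓΔ : Γ = Δ := by
    by_contra hne
    have hproper : Γ ⊂ Δ := lt_of_le_of_ne hΓsub hne
    obtain ⟨F₁, hF₁Γ, hleaf⟩ := hcyc.2.2 Γ hproper ⟨F, hFΓ⟩
    -- any H ∉ Γ has empty intersection with F₁
    have hout : ∀ H ∈ Δ, H ∉ Γ → H ∩ F₁ = ∅ := by
      intro H hH hHΓ
      by_contra hne'
      exact hHΓ (hclosed F₁ hF₁Γ H hH ((Finset.nonempty_iff_ne_empty.mpr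
        (fun h => hne' (by rwa [Finset.inter_comm] at h)))))
    apply hcyc.2.1
    refine ⟨F₁, hΓsub hF₁Γ, ?_⟩
    rcases hleaf with hsing | ⟨G', hG'Γ, hG'⟩
    · -- Γ = {F₁}; Δ ≠ Γ so ∃ G₀ ∈ Δ.erase F₁
      obtain ⟨G₀, hG₀Δ, hG₀Γ⟩ := Finset.exists_of_ssubset hproper
      have hG₀e : G₀ ∈ Δ.erase F₁ := by
        refine Finset.mem_erase.mpr ⟨?_, hG₀Δ⟩
        rintro rfl; exact hG₀Γ (hsing ▸ Finset.mem_singleton_self _)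
      refine Or.inr ⟨G₀, hG₀e, ?_⟩
      intro H hH
      have hHΓ : H ∉ Γ := by
        rw [hsing]; simpa using (Finset.mem_erase.mp hH).1
      rw [hout H (Finset.mem_of_mem_erase hH) hHΓ]
      exact Finset.empty_subset _
    · refine Or.inr ⟨G', Finset.mem_erase.mpr ⟨(Finset.mem_erase.mp hG'Γ).1,
        hΓsub (Finset.mem_of_mem_erase hG'Γ)⟩, ?_⟩
      intro H hH
      by_cases hHΓ : H ∈ Γ
      · exact hG' H (Finset.mem_erase.mpr ⟨(Finset.mem_erase.mp hH).1, hHΓ⟩)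
      · rw [hout H (Finset.mem_of_mem_erase hH) hHΓ]
        exact Finset.empty_subset _
  have : G ∈ Γ := hΓΔ ▸ hG
  rw [hΓ, Finset.mem_filter] at this
  exact this.2
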